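/- With the setup below, for every integer 1 ≤ i ≤ n − 1 one has d_i ≤ p·d_{σ(i)} + p − 1; consequently ⌊d_i / p⌋ ≤ d_{σ(i)}. -/

import Mathlib

private lemma emod_le_self' (a n : ℤ) (h : 0 ≤ a) (hn : 0 < n) : a % n ≤ a := by
  rcases lt_or_ge a n with h1 | h1
  · rw [Int.emod_eq_of_lt h h1]
  · exact le_trans (Int.emod_lt_of_pos a hn).le h1

/-- With `d j = ∑_{α ∈ B} ⟨j n_α / n⟩ - 1`, for every `1 ≤ i ≤ n - 1`
one has `d i ≤ p * d (σ i) + p - 1`; consequently `⌊d i / p⌋ ≤ d (σ i)`. -/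
theorem stmt_7 {ι : Type*} (p : ℕ) (hp : p.Prime)
    (n : ℕ) (hn : 2 ≤ n) (hnp : Nat.Coprime n p)
    (B : Finset ι) (hB : B.Nonempty)
    (e : ι → ℕ) (he : ∀ α ∈ B, 0 < e α ∧ e α < n)
    (hsum : n ∣ ∑ α ∈ B, e α)
    (d : ℕ → ℤ)
    (hd : ∀ j, d j = (∑ α ∈ B, ((j : ℤ) * (e α : ℤ)) % (n : ℤ)) / (n : ℤ) - 1)
    (i : ℕ) (hi1 : 1 ≤ i) (hi2 : i ≤ n - 1)
    (σi : ℕ) (hσ1 : 1 ≤ σi) (hσ2 : σi ≤ n - 1) (hσ3 : p * σi ≡ i [MOD n]) :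
    d i ≤ p * d σi + p - 1 ∧ Int.fdiv (d i) p ≤ d σi := by
  have hn0 : (0 : ℤ) < (n : ℤ) := by exact_mod_cast (by omega : 0 < n)
  have hp0 : (0 : ℤ) < (p : ℤ) := by exact_mod_cast hp.pos
  set S : ℕ → ℤ := fun j => ∑ α ∈ B, ((j : ℤ) * (e α : ℤ)) % (n : ℤ) with hS
  -- divisibility of S j by n
  have hdvd : ∀ j : ℕ, (n : ℤ) ∣ S j := by
    intro j
    have h1 : S j % n = (∑ α ∈ B, (j : ℤ) * (e α : ℤ)) % n :=
      (Finset.sum_int_mod B (n : ℤ) _).symm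
    have h2 : (∑ α ∈ B, (j : ℤ) * (e α : ℤ)) = (j : ℤ) * (∑ α ∈ B, (e α : ℤ)) := by
      rw [Finset.mul_sum]
    have h3 : (n : ℤ) ∣ ∑ α ∈ B, (e α : ℤ) := by
      have := Int.natCast_dvd_natCast.mpr hsum
      push_cast at this ⊢
      exact this
    rw [Int.dvd_iff_emod_eq_zero, h1, h2]
    exact Int.emod_eq_zero_of_dvd (h3.mul_left _)
  -- pointwise bound
  have hpt : ∀ α ∈ B, ((i : ℤ) * (e α : ℤ)) % n ≤ (p : ℤ) * (((σi : ℤ) * (e α : ℤ)) % n) := by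
    intro α _
    have hmc : ((p * σi : ℕ) : ℤ) ≡ (i : ℤ) [ZMOD (n : ℤ)] := Int.natCast_modEq_iff.mpr hσ3
    push_cast at hmc
    have h1 : (i : ℤ) * (e α : ℤ) ≡ (p : ℤ) * (((σi : ℤ) * (e α : ℤ)) % n) [ZMOD (n : ℤ)] := by
      calc (i : ℤ) * (e α : ℤ) ≡ (p : ℤ) * (σi : ℤ) * (e α : ℤ) [ZMOD (n : ℤ)] :=
            (hmc.symm).mul_right _
        _ = (p : ℤ) * ((σi : ℤ) * (e α : ℤ)) := by ring
        _ ≡ (p : ℤ) * (((σi : ℤ) * (e α : ℤ)) % n) [ZMOD (n : ℤ)] :=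
            Int.ModEq.mul_left _ ((Int.emod_emod_of_dvd _ dvd_rfl).symm)
    have h2 : ((i : ℤ) * (e α : ℤ)) % n = ((p : ℤ) * (((σi : ℤ) * (e α : ℤ)) % n)) % n := h1
    rw [h2]
    refine emod_le_self' _ _ ?_ hn0
    exact mul_nonneg hp0.le (Int.emod_nonneg _ (ne_of_gt hn0))
  have hSle : S i ≤ (p : ℤ) * S σi := by
    rw [hS, Finset.mul_sum]
    exact Finset.sum_le_sum hpt
  -- divide by n
  have hdivle : S i / n ≤ (p : ℤ) * (S σi / n) := by
    have := Int.ediv_le_ediv hn0 hSle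
    rwa [Int.mul_ediv_assoc _ (hdvd σi)] at this
  have hdi : d i = S i / n - 1 := hd i
  have hdσ : d σi = S σi / n - 1 := hd σi
  have hmain : d i ≤ p * d σi + p - 1 := by
    rw [hdi, hdσ]
    have : (p : ℤ) * (S σi / n - 1) + p - 1 = (p : ℤ) * (S σi / n) - 1 := by ring
    rw [this]
    linarith
  refine ⟨hmain, ?_⟩
  rw [Int.fdiv_eq_ediv_of_nonneg _ hp0.le]
  have hlt : d i < (d σi + 1) * p := by nlinarith
  have := (Int.ediv_lt_iff_lt_mul hp0).mpr hlt
  omega
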